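/- (Symmetry of the M1 one-step map.) Let B, E : ℂ³ → ℂ³ be arbitrary functions and for x ∈ ℂ³ let F(x) = [[B̃(x), −iE(x)],[iE(x)ᵀ, 0]] ∈ ℂ^{4×4}. For h ∈ ℝ define Φ_h : ℂ⁴ × ℂ⁴ → ℂ⁴ × ℂ⁴ by Φ_h(y, u) = (y⁺, u⁺), where y⁺ = y + h·exp((h/2)F(x))·u, u⁺ = exp((h/2)F(x⁺))·exp((h/2)F(x))·u, and x, x⁺ denote the first three components of y, y⁺ respectively. Then Φ_{−h}(Φ_h(y, u)) = (y, u) for all (y, u), i.e. the method is symmetric: Φ_h⁻¹ = Φ_{−h}. -/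

import Mathlib

open Matrix

/-- The 4×4 complex field matrix `F(x) = [[B̃(x), −iE(x)],[iE(x)ᵀ, 0]]`,
where `B̃(x)α = α × B(x)`, for complex field functions `B, E`. -/
noncomputable def FmatC (B E : (Fin 3 → ℂ) → (Fin 3 → ℂ)) (x : Fin 3 → ℂ) :
    Matrix (Fin 4) (Fin 4) ℂ :=
  !![0, B x 2, -B x 1, -Complex.I * E x 0;
     -B x 2, 0, B x 0, -Complex.I * E x 1;
     B x 1, -B x 0, 0, -Complex.I * E x 2;
     Complex.I * E x 0, Complex.I * E x 1, Complex.I * E x 2, 0]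

/-- The spatial part (first three components) of a 4-vector. -/
def spatial (y : Fin 4 → ℂ) : Fin 3 → ℂ := fun i => y i.castSucc

/-- The one-step map `Φ_h` of the splitting method M1:
`y⁺ = y + h·exp((h/2)F(x))u`, `u⁺ = exp((h/2)F(x⁺))·exp((h/2)F(x))·u`. -/
noncomputable def PhiM1 (B E : (Fin 3 → ℂ) → (Fin 3 → ℂ)) (h : ℝ)
    (p : (Fin 4 → ℂ) × (Fin 4 → ℂ)) : (Fin 4 → ℂ) × (Fin 4 → ℂ) :=
  let y := p.1
  let u := p.2
  let yplus := y + (h : ℂ) •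
    (NormedSpace.exp (((h : ℂ) / 2) • FmatC B E (spatial y)) *ᵥ u)
  (yplus,
    NormedSpace.exp (((h : ℂ) / 2) • FmatC B E (spatial yplus)) *ᵥ
      (NormedSpace.exp (((h : ℂ) / 2) • FmatC B E (spatial y)) *ᵥ u))

lemma exp_cancel (M : Matrix (Fin 4) (Fin 4) ℂ) (v : Fin 4 → ℂ) :
    NormedSpace.exp (-M) *ᵥ (NormedSpace.exp M *ᵥ v) = v := by
  have key := Matrix.exp_add_of_commute (-M) M ((Commute.refl M).neg_left)
  rw [neg_add_cancel, NormedSpace.exp_zero] at key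
  have key' : NormedSpace.exp (-M) * NormedSpace.exp M = 1 := key.symm
  rw [mulVec_mulVec, key', one_mulVec]

lemma neg_coe_smul (h : ℝ) (M : Matrix (Fin 4) (Fin 4) ℂ) :
    (((-h : ℝ) : ℂ) / 2) • M = -((((h : ℝ) : ℂ) / 2) • M) := by
  push_cast
  rw [neg_div, neg_smul]

/-- Symmetry of the M1 one-step map: `Φ_{−h} ∘ Φ_h = id`. -/
theorem PhiM1_symmetric (B E : (Fin 3 → ℂ) → (Fin 3 → ℂ)) (h : ℝ)
    (y u : Fin 4 → ℂ) :
    PhiM1 B E (-h) (PhiM1 B E h (y, u)) = (y, u) := by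
  simp only [PhiM1]
  set A := NormedSpace.exp (((h : ℂ) / 2) • FmatC B E (spatial y)) with hA
  set yp := y + (h : ℂ) • (A *ᵥ u) with hyp
  have h1 : NormedSpace.exp ((((-h : ℝ) : ℂ) / 2) • FmatC B E (spatial yp)) *ᵥ
      (NormedSpace.exp (((h : ℂ) / 2) • FmatC B E (spatial yp)) *ᵥ (A *ᵥ u)) = A *ᵥ u := by
    rw [neg_coe_smul, exp_cancel]
  have hy2 : yp + ((-h : ℝ) : ℂ) • (A *ᵥ u) = y := by
    rw [hyp]
    push_cast
    rw [neg_smul]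
    abel
  refine Prod.ext ?_ ?_
  · show yp + ((-h : ℝ) : ℂ) •
      (NormedSpace.exp ((((-h : ℝ) : ℂ) / 2) • FmatC B E (spatial yp)) *ᵥ
        (NormedSpace.exp (((h : ℂ) / 2) • FmatC B E (spatial yp)) *ᵥ (A *ᵥ u))) = y
    rw [h1, hy2]
  · show NormedSpace.exp ((((-h : ℝ) : ℂ) / 2) • FmatC B E (spatial (yp + ((-h : ℝ) : ℂ) •
      (NormedSpace.exp ((((-h : ℝ) : ℂ) / 2) • FmatC B E (spatial yp)) *ᵥ
        (NormedSpace.exp (((h : ℂ) / 2) • FmatC B E (spatial yp)) *ᵥ (A *ᵥ u)))))) *ᵥ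
      (NormedSpace.exp ((((-h : ℝ) : ℂ) / 2) • FmatC B E (spatial yp)) *ᵥ
        (NormedSpace.exp (((h : ℂ) / 2) • FmatC B E (spatial yp)) *ᵥ (A *ᵥ u))) = u
    rw [h1, hy2, neg_coe_smul]
    exact exp_cancel _ u
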